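/- The sequence x̄ ∈ ([0,1]²)^ℕ constructed from the triangle data is not minimal. In fact, for every index i > 1, d̄(((0,0),(1,0),(0,1)), (x_i,x_{i+1},x_{i+2})) ≥ 1/8, where d̄ on 3-blocks is d̄((u_1,u_2,u_3),(w_1,w_2,w_3)) = Σ_{k=1}^3 d(u_k,w_k)/2^k with d the Euclidean metric on [0,1]². -/

import Mathlib

open Set unitInterval

/-- The left shift `S` on sequences: `S(x₁,x₂,x₃,…) = (x₂,x₃,…)`. -/
def shiftSeq {X : Type*} (z : ℕ → X) : ℕ → X := fun n => z (n + 1)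

/-- The closure of the forward shift-orbit `{z, Sz, S²z, …}` of a sequence `z`,
inside the sequence space `ℕ → X`.  (For a compact metric space `X` the product
topology on `ℕ → X` is exactly the topology of the metric
`d̄(x̄,ȳ) = ∑ᵢ d(xᵢ,yᵢ)/2ⁱ`.) -/
def shiftOrbitClosure {X : Type*} [TopologicalSpace X] (z : ℕ → X) : Set (ℕ → X) :=
  closure (Set.range fun k => shiftSeq^[k] z)

/-- A sequence `z` is *minimal* if the closure of its shift-orbit is a minimal
dynamical system under the shift, i.e. every point of this closure has dense
forward orbit in it. -/
def IsMinimalSeq {X : Type*} [TopologicalSpace X] (z : ℕ → X) : Prop :=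
  ∀ w ∈ shiftOrbitClosure z, shiftOrbitClosure z ⊆ shiftOrbitClosure w

/-- The 2-Toeplitz sequence of `B = (b 0, b 1, …)` (all sequences 0-indexed):
its `n`-th term is `b p` where `2 ^ p` exactly divides `n + 1`; equivalently the
term at (1-indexed) position `j` is `b_i` for all `j ≡ 2^(i-1) (mod 2^i)`. -/
def toeplitz2 {X : Type*} (b : ℕ → X) : ℕ → X :=
  fun n => b (padicValNat 2 (n + 1))

noncomputable section

/-- The plane with the Euclidean metric. -/
abbrev E2 := EuclideanSpace ℝ (Fin 2)

def p00 : E2 := WithLp.toLp 2 ![0, 0]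
def p10 : E2 := WithLp.toLp 2 ![1, 0]
def p01 : E2 := WithLp.toLp 2 ![0, 1]

/-- Flatten a sequence of triples into a sequence, each triple contributing
three consecutive terms. -/
def flattenTriples {Y : Type*} (b : ℕ → Y × Y × Y) : ℕ → Y := fun n =>
  if n % 3 = 0 then (b (n / 3)).1
  else if n % 3 = 1 then (b (n / 3)).2.1
  else (b (n / 3)).2.2

/-- The sequence `x̄ = ((0,0),(1,0),(0,1)) ∗ b̄` where `b̄` is the 2-Toeplitz
sequence associated with `v`, each triple of `b̄` contributing three consecutive
terms of `x̄`. -/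
def triSeq (v : ℕ → E2 × E2 × E2) : ℕ → E2 := fun n =>
  if n = 0 then p00 else if n = 1 then p10 else if n = 2 then p01
  else flattenTriples (toeplitz2 v) (n - 3)

lemma seg1' : ∀ a ∈ segment ℝ p10 p01, (1:ℝ)/2 ≤ dist p00 a := by
  rintro a ⟨u, w, hu, hw, huw, rfl⟩
  rw [EuclideanSpace.dist_eq]
  rw [show ((1:ℝ)/2) = Real.sqrt ((1/2)^2) by rw [Real.sqrt_sq]; norm_num]
  apply Real.sqrt_le_sqrt
  simp [Fin.sum_univ_two, p00, p10, p01]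
  nlinarith [sq_nonneg (u - w)]

lemma seg2' : ∀ b ∈ segment ℝ p00 p01, (1:ℝ) ≤ dist p10 b := by
  rintro b ⟨u, w, hu, hw, huw, rfl⟩
  rw [EuclideanSpace.dist_eq]
  rw [show ((1:ℝ)) = Real.sqrt (1^2) by rw [Real.sqrt_sq]; norm_num]
  apply Real.sqrt_le_sqrt
  simp [Fin.sum_univ_two, p00, p10, p01]
  nlinarith

lemma seg3' : ∀ c ∈ segment ℝ p00 p10, (1:ℝ) ≤ dist p01 c := by
  rintro c ⟨u, w, hu, hw, huw, rfl⟩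
  rw [EuclideanSpace.dist_eq]
  rw [show ((1:ℝ)) = Real.sqrt (1^2) by rw [Real.sqrt_sq]; norm_num]
  apply Real.sqrt_le_sqrt
  simp [Fin.sum_univ_two, p00, p10, p01]
  nlinarith

/-- component selector -/
def getc (p : E2 × E2 × E2) (r : ℕ) : E2 :=
  if r = 0 then p.1 else if r = 1 then p.2.1 else p.2.2

lemma shiftSeq_iterate {X : Type*} (z : ℕ → X) (m : ℕ) :
    shiftSeq^[m] z = fun n => z (n + m) := by
  induction m with
  | zero => simp
  | succ m ih =>
    rw [Function.iterate_succ_apply', ih]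
    funext n
    simp [shiftSeq]
    ring_nf

/-- The sequence `x̄` built from the triangle data is not minimal; in fact the
initial 3-block `((0,0),(1,0),(0,1))` stays at `d̄`-distance at least `1/8`
(where `d̄((u₁,u₂,u₃),(w₁,w₂,w₃)) = ∑ₖ d(uₖ,wₖ)/2ᵏ`, `d` Euclidean) from every
later 3-block.  Here `A₁, A₂, A₃` are countable dense subsets of the segments
`[(1,0),(0,1)]`, `[(0,0),(0,1)]`, `[(0,0),(1,0)]` respectively, and `v` is an
enumeration of `(A₁×{(1,0)}×{(0,1)}) ∪ ({(0,0)}×A₂×{(0,1)}) ∪ ({(0,0)}×{(1,0)}×A₃)`. -/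
theorem triSeq_not_minimal
    (A1 A2 A3 : Set E2)
    (hA1s : A1 ⊆ segment ℝ p10 p01) (hA1c : A1.Countable)
    (hA1d : segment ℝ p10 p01 ⊆ closure A1)
    (hA2s : A2 ⊆ segment ℝ p00 p01) (hA2c : A2.Countable)
    (hA2d : segment ℝ p00 p01 ⊆ closure A2)
    (hA3s : A3 ⊆ segment ℝ p00 p10) (hA3c : A3.Countable)
    (hA3d : segment ℝ p00 p10 ⊆ closure A3)
    (v : ℕ → E2 × E2 × E2) (hvinj : Function.Injective v)
    (hvr : Set.range v =
      (A1 ×ˢ (({p10} : Set E2) ×ˢ ({p01} : Set E2))) ∪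
      (({p00} : Set E2) ×ˢ (A2 ×ˢ ({p01} : Set E2))) ∪
      (({p00} : Set E2) ×ˢ (({p10} : Set E2) ×ˢ A3))) :
    ¬ IsMinimalSeq (triSeq v) ∧
      ∀ i : ℕ, 1 ≤ i →
        (1 : ℝ) / 8 ≤ dist p00 (triSeq v i) / 2 + dist p10 (triSeq v (i + 1)) / 4
          + dist p01 (triSeq v (i + 2)) / 8 := by
  -- the triple at block j
  set T : ℕ → E2 × E2 × E2 := fun j => if j = 0 then (p00, p10, p01) else v (padicValNat 2 j)
    with hT
  have hblock : ∀ n : ℕ, triSeq v n = getc (T (n / 3)) (n % 3) := by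
    intro n
    match n, (by omega : n = 0 ∨ n = 1 ∨ n = 2 ∨ 3 ≤ n) with
    | 0, _ => simp [triSeq, T, getc]
    | 1, _ => simp [triSeq, T, getc]
    | 2, _ => simp [triSeq, T, getc]
    | (n+3), _ =>
      have h1 : (n + 3) / 3 = n / 3 + 1 := by omega
      have h2 : (n + 3) % 3 = n % 3 := by omega
      simp only [triSeq, flattenTriples, toeplitz2, T, getc, h1, h2]
      have : n / 3 + 1 ≠ 0 := by omega
      rcases (by omega : n % 3 = 0 ∨ n % 3 = 1 ∨ n % 3 = 2) with h | h | h <;>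
        simp [h, this]
  have hT0 : T 0 = (p00, p10, p01) := by simp [T]
  -- every block is "good"
  have hgood : ∀ j : ℕ, j ≠ 0 →
      ((T j).1 ∈ segment ℝ p10 p01 ∧ (T j).2.1 = p10 ∧ (T j).2.2 = p01) ∨
      ((T j).1 = p00 ∧ (T j).2.1 ∈ segment ℝ p00 p01 ∧ (T j).2.2 = p01) ∨
      ((T j).1 = p00 ∧ (T j).2.1 = p10 ∧ (T j).2.2 ∈ segment ℝ p00 p10) := by
    intro j hj
    · have hm : T j ∈ Set.range v := by simp [T, hj]
      rw [hvr] at hm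
      rcases hm with (h | h) | h
    
      · rcases h with ⟨h1, h2, h3⟩
        exact Or.inl ⟨hA1s h1, h2, h3⟩
      · rcases h with ⟨h1, h2, h3⟩
        exact Or.inr (Or.inl ⟨h1, hA2s h2, h3⟩)
      · rcases h with ⟨h1, h2, h3⟩
        exact Or.inr (Or.inr ⟨h1, h2, hA3s h3⟩)
  -- basic distances
  have d0010 : (1:ℝ) ≤ dist p00 p10 := by
    rw [dist_comm]; exact seg2' p00 (left_mem_segment ℝ p00 p01)
  have d0001 : (1:ℝ) ≤ dist p00 p01 := by
    rw [dist_comm]; exact seg3' p00 (left_mem_segment ℝ p00 p10)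
  have d1001 : (1:ℝ) ≤ dist p10 p01 := seg2' p01 (right_mem_segment ℝ p00 p01)
  have d0110 : (1:ℝ) ≤ dist p01 p10 := seg3' p10 (right_mem_segment ℝ p00 p10)
  -- main estimate
  have main : ∀ i : ℕ, 1 ≤ i →
      (1 : ℝ) / 8 ≤ dist p00 (triSeq v i) / 2 + dist p10 (triSeq v (i + 1)) / 4
        + dist p01 (triSeq v (i + 2)) / 8 := by
    intro i hi
    have n1 : (0:ℝ) ≤ dist p00 (triSeq v i) := dist_nonneg
    have n2 : (0:ℝ) ≤ dist p10 (triSeq v (i+1)) := dist_nonneg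
    have n3 : (0:ℝ) ≤ dist p01 (triSeq v (i+2)) := dist_nonneg
    rcases (by omega : i % 3 = 0 ∨ i % 3 = 1 ∨ i % 3 = 2) with h | h | h
    · -- i = 3j, j ≥ 1
      have e1 : triSeq v i = (T (i/3)).1 := by rw [hblock]; simp [getc, h]
      have e2 : triSeq v (i+1) = (T (i/3)).2.1 := by
        rw [hblock, (by omega : (i+1)/3 = i/3), (by omega : (i+1)%3 = 1)]; simp [getc]
      have e3 : triSeq v (i+2) = (T (i/3)).2.2 := by
        rw [hblock, (by omega : (i+2)/3 = i/3), (by omega : (i+2)%3 = 2)]; simp [getc]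
      rcases hgood (i/3) (by omega) with ⟨h1, _, _⟩ | ⟨_, h2, _⟩ | ⟨_, _, h3⟩
      · have := seg1' _ h1; rw [← e1] at this; linarith
      · have := seg2' _ h2; rw [← e2] at this; linarith
      · have := seg3' _ h3; rw [← e3] at this; linarith
    · -- i = 3j+1
      have e1 : triSeq v i = (T (i/3)).2.1 := by rw [hblock]; simp [getc, h]
      have e2 : triSeq v (i+1) = (T (i/3)).2.2 := by
        rw [hblock, (by omega : (i+1)/3 = i/3), (by omega : (i+1)%3 = 2)]; simp [getc]
      rcases eq_or_ne (i/3) 0 with h0 | h0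
      · rw [e1, h0, hT0] at n1 ⊢; linarith
      rcases hgood (i/3) h0 with ⟨_, h2, _⟩ | ⟨_, h2, h3⟩ | ⟨_, h2, _⟩
      · rw [e1, h2] at n1 ⊢; linarith
      · rw [e2, h3] at n2 ⊢; linarith
      · rw [e1, h2] at n1 ⊢; linarith
    · -- i = 3j+2
      have e1 : triSeq v i = (T (i/3)).2.2 := by rw [hblock]; simp [getc, h]
      have e2 : triSeq v (i+1) = (T (i/3+1)).1 := by
        rw [hblock, (by omega : (i+1)/3 = i/3+1), (by omega : (i+1)%3 = 0)]; simp [getc]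
      have e3 : triSeq v (i+2) = (T (i/3+1)).2.1 := by
        rw [hblock, (by omega : (i+2)/3 = i/3+1), (by omega : (i+2)%3 = 1)]; simp [getc]
      rcases eq_or_ne (i/3) 0 with h0 | h0
      · rw [e1, h0, hT0] at n1 ⊢; linarith
      rcases hgood (i/3) h0 with ⟨_, _, h3⟩ | ⟨_, _, h3⟩ | _
      · rw [e1, h3] at n1 ⊢; linarith
      · rw [e1, h3] at n1 ⊢; linarith
      · rcases hgood (i/3+1) (by omega) with ⟨_, h2', _⟩ | ⟨h1', _, _⟩ | ⟨h1', _, _⟩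
        · rw [e3, h2'] at n3 ⊢; linarith
        · rw [e2, h1'] at n2 ⊢; rw [dist_comm] at d0010; linarith
        · rw [e2, h1'] at n2 ⊢; rw [dist_comm] at d0010; linarith
  refine ⟨?_, main⟩
  -- non-minimality
  intro hmin
  set z := triSeq v with hz
  have hw : shiftSeq z ∈ shiftOrbitClosure z := by
    apply subset_closure
    exact ⟨1, by simp⟩
  have hsub := hmin (shiftSeq z) hw
  have hzmem : z ∈ shiftOrbitClosure z := subset_closure ⟨0, by simp⟩
  have hzmem' := hsub hzmem
  -- but z is not in the orbit closure of shiftSeq z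
  set C : Set (ℕ → E2) := {y | (1:ℝ)/8 ≤ dist p00 (y 0) / 2 + dist p10 (y 1) / 4
      + dist p01 (y 2) / 8} with hC
  have hCclosed : IsClosed C := by
    have : Continuous fun y : ℕ → E2 => dist p00 (y 0) / 2 + dist p10 (y 1) / 4
        + dist p01 (y 2) / 8 := by
      apply Continuous.add
      apply Continuous.add
      · exact (continuous_const.dist (continuous_apply 0)).div_const 2
      · exact (continuous_const.dist (continuous_apply 1)).div_const 4
      · exact (continuous_const.dist (continuous_apply 2)).div_const 8
    exact isClosed_Ici.preimage this
  have hRC : shiftOrbitClosure (shiftSeq z) ⊆ C := by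
    apply closure_minimal _ hCclosed
    rintro y ⟨k, rfl⟩
    have hy : shiftSeq^[k] (shiftSeq z) = fun n => z (n + k + 1) := by
      rw [shiftSeq_iterate]
      rfl
    simp only [hC, Set.mem_setOf_eq, hy]
    have := main (k + 1) (by omega)
    calc (1:ℝ)/8 ≤ dist p00 (z (k+1)) / 2 + dist p10 (z (k+1+1)) / 4
          + dist p01 (z (k+1+2)) / 8 := main (k+1) (by omega)
      _ = _ := by
          rw [(by omega : 0 + k + 1 = k + 1), (by omega : 1 + k + 1 = k + 1 + 1),
            (by omega : 2 + k + 1 = k + 1 + 2)]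
  have := hRC hzmem'
  rw [hC] at this
  simp only [Set.mem_setOf_eq] at this
  have z0 : z 0 = p00 := by simp [hz, triSeq]
  have z1 : z 1 = p10 := by simp [hz, triSeq]
  have z2 : z 2 = p01 := by simp [hz, triSeq]
  rw [z0, z1, z2] at this
  simp at this
  linarith

end
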